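/- Let A ∈ ℝ^{m×n}, x₀ ∈ ℝ^n nonzero, and f : ℝ^n → ℝ convex. If every subgradient g ∈ ∂f(x₀) satisfies |⟨g/‖g‖₂, x₀/‖x₀‖₂⟩| > ‖A(x₀/‖x₀‖₂)‖₂ / σ_min(Aᵀ) (with σ_min(Aᵀ) > 0 the smallest singular value of Aᵀ), then x₀ is not a minimizer of f over the affine set {x : Ax = Ax₀}, i.e., there exists x' with Ax' = Ax₀ and f(x') < f(x₀). -/

import Mathlib

open Matrix
open scoped RealInnerProductSpace

set_option maxHeartbeats 1000000 in
/-- If every subgradient `g ∈ ∂f(x₀)` satisfies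
`|⟨g/‖g‖, x₀/‖x₀‖⟩| > ‖A x̄₀‖/σ_min(Aᵀ)` where `σ_min(Aᵀ) > 0` is the smallest singular
value of `Aᵀ` (the infimum of `‖Aᵀz‖` over unit vectors `z`), then `x₀` does not minimize
the convex function `f` over `{x : Ax = Ax₀}`. -/
theorem deterministic_failure {m n : ℕ}
    (A : Matrix (Fin m) (Fin n) ℝ)
    (x₀ : EuclideanSpace ℝ (Fin n)) (hx₀ : x₀ ≠ 0)
    (f : EuclideanSpace ℝ (Fin n) → ℝ) (hf : ConvexOn ℝ Set.univ f)
    (σmin : ℝ)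
    (hσdef : σmin = ⨅ z : Metric.sphere (0 : EuclideanSpace ℝ (Fin m)) 1,
      ‖Matrix.toEuclideanLin Aᵀ (z : EuclideanSpace ℝ (Fin m))‖)
    (hσpos : 0 < σmin)
    (hsub_ne : {g : EuclideanSpace ℝ (Fin n) | ∀ z, f x₀ + ⟪g, z - x₀⟫ ≤ f z}.Nonempty)
    (hsub_zero : ¬ (∀ z, f x₀ + ⟪(0 : EuclideanSpace ℝ (Fin n)), z - x₀⟫ ≤ f z))
    (hcorr : ∀ g : EuclideanSpace ℝ (Fin n), (∀ z, f x₀ + ⟪g, z - x₀⟫ ≤ f z) →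
      ‖Matrix.toEuclideanLin A (‖x₀‖⁻¹ • x₀)‖ / σmin < |⟪‖g‖⁻¹ • g, ‖x₀‖⁻¹ • x₀⟫|) :
    ∃ x' : EuclideanSpace ℝ (Fin n),
      Matrix.toEuclideanLin A x' = Matrix.toEuclideanLin A x₀ ∧ f x' < f x₀ := by
  classical
  set T : EuclideanSpace ℝ (Fin n) →ₗ[ℝ] EuclideanSpace ℝ (Fin m) :=
    Matrix.toEuclideanLin A with hT
  by_contra hcon
  push_neg at hcon
  -- f is continuous
  have hfc : Continuous f := by
    rw [← continuousOn_univ]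
    exact hf.continuousOn isOpen_univ
  -- separation setup
  set C : Set (EuclideanSpace ℝ (Fin n) × ℝ) := {p | f p.1 < p.2} with hC
  set D : Set (EuclideanSpace ℝ (Fin n) × ℝ) := {p | T p.1 = T x₀ ∧ p.2 = f x₀} with hD
  have hCconv : Convex ℝ C := by
    have := hf.convex_strict_epigraph
    simpa using this
  have hCopen : IsOpen C := by
    have : IsOpen {p : EuclideanSpace ℝ (Fin n) × ℝ | f p.1 < p.2} :=
      isOpen_lt (hfc.comp continuous_fst) continuous_snd
    exact this
  have hDconv : Convex ℝ D := by
    intro p hp q hq a b ha hb hab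
    refine ⟨?_, ?_⟩
    · show T (a • p + b • q).1 = T x₀
      simp only [Prod.fst_add, Prod.smul_fst]
      rw [map_add, LinearMap.map_smul, LinearMap.map_smul, hp.1, hq.1, ← add_smul, hab, one_smul]
    · show (a • p + b • q).2 = f x₀
      simp only [Prod.snd_add, Prod.smul_snd, hp.2, hq.2, smul_eq_mul]
      rw [← add_mul, hab, one_mul]
  have hdisj : Disjoint C D := by
    rw [Set.disjoint_left]
    rintro p hpC ⟨hp1, hp2⟩
    have := hcon p.1 hp1
    simp only [hC, Set.mem_setOf_eq] at hpC
    rw [hp2] at hpC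
    linarith
  obtain ⟨ℓ, u, hCu, hDu⟩ := geometric_hahn_banach_open hCconv hCopen hDconv hdisj
  set α : ℝ := ℓ (0, 1) with hα
  have hsplit : ∀ (x : EuclideanSpace ℝ (Fin n)) (t : ℝ), ℓ (x, t) = ℓ (x, 0) + t * α := by
    intro x t
    have : (x, t) = (x, (0:ℝ)) + t • ((0:EuclideanSpace ℝ (Fin n)), (1:ℝ)) := by
      simp [Prod.ext_iff]
    rw [this, map_add, _root_.map_smul]
    simp [hα]
  -- epigraph inequality (strict)
  have h1 : ∀ (z : EuclideanSpace ℝ (Fin n)) (t : ℝ), f z < t → ℓ (z, 0) + t * α < u := by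
    intro z t ht
    have := hCu (z, t) ht
    rwa [hsplit] at this
  -- limit version
  have h1' : ∀ z : EuclideanSpace ℝ (Fin n), ℓ (z, 0) + f z * α ≤ u := by
    intro z
    have htend : Filter.Tendsto (fun ε : ℝ => ℓ (z, 0) + (f z + ε) * α)
        (nhdsWithin 0 (Set.Ioi 0)) (nhds (ℓ (z, 0) + f z * α)) := by
      have : Filter.Tendsto (fun ε : ℝ => ℓ (z, 0) + (f z + ε) * α)
          (nhds 0) (nhds (ℓ (z, 0) + (f z + 0) * α)) := by
        apply Filter.Tendsto.const_add
        exact ((tendsto_const_nhds.add Filter.tendsto_id).mul tendsto_const_nhds)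
      simpa using this.mono_left nhdsWithin_le_nhds
    refine le_of_tendsto htend ?_
    filter_upwards [self_mem_nhdsWithin] with ε hε
    exact (h1 z (f z + ε) (by linarith [Set.mem_Ioi.mp hε])).le
  -- D inequality
  have h2 : ∀ d : EuclideanSpace ℝ (Fin n), T d = 0 → u ≤ ℓ (x₀ + d, 0) + f x₀ * α := by
    intro d hd
    have hmem : ((x₀ + d, f x₀) : EuclideanSpace ℝ (Fin n) × ℝ) ∈ D := by
      constructor
      · simp [map_add, hd]
      · rfl
    have := hDu _ hmem
    rwa [hsplit] at this
  have h20 : u ≤ ℓ (x₀, 0) + f x₀ * α := by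
    simpa using h2 0 (map_zero T)
  -- α ≤ 0
  have hαle : α ≤ 0 := by
    by_contra hpos
    push_neg at hpos
    set t : ℝ := max (f 0 + 1) ((u - ℓ (0, 0)) / α)
    have h3 := h1 0 t (lt_of_lt_of_le (by linarith) (le_max_left _ _))
    have h4 : (u - ℓ (0, 0)) / α ≤ t := le_max_right _ _
    have : u - ℓ (0, 0) ≤ t * α := by
      rw [div_le_iff₀ hpos] at h4; linarith
    linarith
  -- α ≠ 0
  have hαne : α < 0 := by
    rcases lt_or_eq_of_le hαle with h | h
    · exact h
    · exfalso
      have hz : ∀ z : EuclideanSpace ℝ (Fin n), ℓ (z, 0) ≤ u := by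
        intro z; have h9 := h1' z; rw [h] at h9; linarith
      have hzero : ∀ z : EuclideanSpace ℝ (Fin n), ℓ (z, 0) = 0 := by
        intro z
        by_contra hne
        have h5 : ℓ (((|u| + 1) / ℓ (z, 0)) • z, 0) = ((|u| + 1) / ℓ (z, 0)) * ℓ (z, 0) := by
          have : ((((|u| + 1) / ℓ (z, 0)) • z, (0:ℝ))) =
              ((|u| + 1) / ℓ (z, 0)) • ((z, (0:ℝ))) := by simp [Prod.ext_iff]
          rw [this, _root_.map_smul]; rfl
        have h6 := hz (((|u| + 1) / ℓ (z, 0)) • z)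
        rw [h5, div_mul_cancel₀ _ hne] at h6
        linarith [le_abs_self u]
      have hu1 : u ≤ 0 := by
        have h9 := h20; rw [hzero x₀, h] at h9; linarith
      have hu2 : (0:ℝ) < u := by
        have h9 := h1 0 (f 0 + 1) (by linarith)
        rw [hzero 0, h] at h9; linarith
      linarith
  -- define the subgradient g
  set L : EuclideanSpace ℝ (Fin n) →L[ℝ] ℝ := (-α)⁻¹ • (ℓ.comp (ContinuousLinearMap.inl ℝ (EuclideanSpace ℝ (Fin n)) ℝ)) with hL
  set g : EuclideanSpace ℝ (Fin n) := (InnerProductSpace.toDual ℝ (EuclideanSpace ℝ (Fin n))).symm L with hg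
  have hgx : ∀ x : EuclideanSpace ℝ (Fin n), ⟪(g:EuclideanSpace ℝ (Fin n)), x⟫ = (-α)⁻¹ * ℓ (x, 0) := by
    intro x
    rw [hg, InnerProductSpace.toDual_symm_apply]
    simp [hL]
  have hαne' : (-α) > 0 := by linarith
  -- g is a subgradient
  have hgsub : ∀ z, f x₀ + ⟪g, z - x₀⟫ ≤ f z := by
    intro z
    have e1 := h1' z
    have e2 := h20
    have e3 : ℓ (z - x₀, 0) = ℓ (z, 0) - ℓ (x₀, 0) := by
      have : ((z - x₀, (0:ℝ))) = (z, (0:ℝ)) - (x₀, (0:ℝ)) := by simp [Prod.ext_iff]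
      rw [this, map_sub]
    have e4 : ⟪g, z - x₀⟫ = (-α)⁻¹ * (ℓ (z, 0) - ℓ (x₀, 0)) := by rw [hgx, e3]
    have e5 : ℓ (z, 0) - ℓ (x₀, 0) ≤ (f x₀ - f z) * α := by linarith
    rw [e4]
    have e6 : (-α)⁻¹ * (ℓ (z, 0) - ℓ (x₀, 0)) ≤ (-α)⁻¹ * ((f x₀ - f z) * α) := by
      apply mul_le_mul_of_nonneg_left e5 (le_of_lt (inv_pos.mpr hαne'))
    have e7 : (-α)⁻¹ * ((f x₀ - f z) * α) = f z - f x₀ := by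
      field_simp
      rw [mul_div_cancel_left₀ _ hαne.ne]
      ring
    linarith [e6.trans_eq e7]
  -- g is orthogonal to ker T
  have hker : ∀ d : EuclideanSpace ℝ (Fin n), T d = 0 → ⟪g, d⟫ = 0 := by
    intro d hd
    have key : ℓ (d, 0) = 0 := by
      by_contra hne
      have hs : ∀ s : ℝ, u ≤ ℓ (x₀, 0) + s * ℓ (d, 0) + f x₀ * α := by
        intro s
        have := h2 (s • d) (by rw [_root_.map_smul, hd, smul_zero])
        have e : ℓ (x₀ + s • d, 0) = ℓ (x₀, 0) + s * ℓ (d, 0) := by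
          have : ((x₀ + s • d, (0:ℝ))) = (x₀, (0:ℝ)) + s • (d, (0:ℝ)) := by
            simp [Prod.ext_iff]
          rw [this, map_add, _root_.map_smul]; rfl
        rw [e] at this; linarith
      have := hs ((u - ℓ (x₀, 0) - f x₀ * α - 1) / ℓ (d, 0))
      rw [div_mul_cancel₀ _ hne] at this
      linarith
    rw [hgx, key, mul_zero]
  -- g ∈ range (adjoint T)
  have hrange : ∃ z : EuclideanSpace ℝ (Fin m), LinearMap.adjoint T z = g := by
    have hkereq : LinearMap.ker T = (LinearMap.range (LinearMap.adjoint T))ᗮ := by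
      ext x
      simp only [LinearMap.mem_ker, Submodule.mem_orthogonal, LinearMap.mem_range,
        forall_exists_index]
      constructor
      · rintro hx v z rfl
        rw [LinearMap.adjoint_inner_left, hx, inner_zero_right]
      · intro hx
        have : ⟪T x, T x⟫ = 0 := by
          have := hx (LinearMap.adjoint T (T x)) (T x) rfl
          rwa [LinearMap.adjoint_inner_left] at this
        exact inner_self_eq_zero.mp this
    have : g ∈ (LinearMap.ker T)ᗮ := by
      rw [Submodule.mem_orthogonal]
      intro v hv
      rw [real_inner_comm]
      exact hker v hv
    rw [hkereq, Submodule.orthogonal_orthogonal] at this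
    exact this
  obtain ⟨z, hz⟩ := hrange
  -- toEuclideanLin Aᵀ = adjoint T
  have hTadj : Matrix.toEuclideanLin Aᵀ = LinearMap.adjoint T := by
    rw [hT, ← Matrix.toEuclideanLin_conjTranspose_eq_adjoint,
      Matrix.conjTranspose_eq_transpose_of_trivial]
  -- g ≠ 0
  have hgne : g ≠ 0 := by
    intro h0
    exact hsub_zero (by rw [← h0]; exact hgsub)
  have hzne : z ≠ 0 := by
    intro h0
    apply hgne
    rw [← hz, h0, map_zero]
  have hznorm : (0:ℝ) < ‖z‖ := norm_pos_iff.mpr hzne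
  -- σmin bound
  have hsphere : Nonempty (Metric.sphere (0 : EuclideanSpace ℝ (Fin m)) 1) := by
    by_contra hempty
    rw [not_nonempty_iff] at hempty
    rw [Real.iInf_of_isEmpty] at hσdef
    linarith [hσdef ▸ hσpos]
  have hbdd : BddBelow (Set.range fun w : Metric.sphere (0 : EuclideanSpace ℝ (Fin m)) 1 =>
      ‖Matrix.toEuclideanLin Aᵀ (w : EuclideanSpace ℝ (Fin m))‖) := by
    refine ⟨0, ?_⟩
    rintro x ⟨w, rfl⟩
    exact norm_nonneg _
  have hwmem : (‖z‖⁻¹ • z) ∈ Metric.sphere (0 : EuclideanSpace ℝ (Fin m)) 1 := by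
    rw [mem_sphere_zero_iff_norm, norm_smul, norm_inv, norm_norm,
      inv_mul_cancel₀ (ne_of_gt hznorm)]
  have hσle : σmin ≤ ‖z‖⁻¹ * ‖g‖ := by
    have := ciInf_le hbdd (⟨‖z‖⁻¹ • z, hwmem⟩ : Metric.sphere (0 : EuclideanSpace ℝ (Fin m)) 1)
    rw [← hσdef] at this
    calc σmin ≤ ‖Matrix.toEuclideanLin Aᵀ (‖z‖⁻¹ • z)‖ := this
      _ = ‖z‖⁻¹ * ‖g‖ := by
          rw [_root_.map_smul, norm_smul, norm_inv, norm_norm, hTadj, hz]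
  -- final contradiction using hcorr
  have hx₀norm : (0:ℝ) < ‖x₀‖ := norm_pos_iff.mpr hx₀
  have hgnorm : (0:ℝ) < ‖g‖ := norm_pos_iff.mpr hgne
  have hfinal := hcorr g hgsub
  have hip : ⟪g, x₀⟫ = ⟪z, T x₀⟫ := by
    rw [← hz, LinearMap.adjoint_inner_left]
  have habs : |⟪‖g‖⁻¹ • g, ‖x₀‖⁻¹ • x₀⟫| = ‖g‖⁻¹ * ‖x₀‖⁻¹ * |⟪g, x₀⟫| := by
    rw [real_inner_smul_left, real_inner_smul_right, abs_mul, abs_mul,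
      abs_of_nonneg (inv_nonneg.mpr (norm_nonneg g)),
      abs_of_nonneg (inv_nonneg.mpr (norm_nonneg x₀))]
    ring
  have hcs : |⟪z, T x₀⟫| ≤ ‖z‖ * ‖T x₀‖ := abs_real_inner_le_norm z (T x₀)
  have hTnorm : ‖Matrix.toEuclideanLin A (‖x₀‖⁻¹ • x₀)‖ = ‖x₀‖⁻¹ * ‖T x₀‖ := by
    rw [← hT, _root_.map_smul, norm_smul, norm_inv, norm_norm]
  rw [habs, hip, hTnorm] at hfinal
  -- chain: ‖g‖⁻¹‖x₀‖⁻¹|⟪z,Tx₀⟫| ≤ ‖g‖⁻¹‖x₀‖⁻¹‖z‖‖Tx₀‖ ≤ ‖x₀‖⁻¹‖Tx₀‖/σmin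
  have hTx₀nn : (0:ℝ) ≤ ‖T x₀‖ := norm_nonneg _
  have key1 : ‖g‖⁻¹ * ‖x₀‖⁻¹ * |⟪z, T x₀⟫| ≤ ‖g‖⁻¹ * ‖x₀‖⁻¹ * (‖z‖ * ‖T x₀‖) := by
    apply mul_le_mul_of_nonneg_left hcs
    positivity
  have key2 : ‖g‖⁻¹ * ‖x₀‖⁻¹ * (‖z‖ * ‖T x₀‖) ≤ ‖x₀‖⁻¹ * ‖T x₀‖ / σmin := by
    rw [div_eq_mul_inv]
    have h7 : σmin * ‖z‖ ≤ ‖g‖ := by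
      have h9 := mul_le_mul_of_nonneg_right hσle (le_of_lt hznorm)
      rwa [mul_comm (‖z‖⁻¹) (‖g‖), mul_assoc, inv_mul_cancel₀ (ne_of_gt hznorm), mul_one] at h9
    have h8 : ‖g‖⁻¹ * ‖z‖ ≤ σmin⁻¹ := by
      rw [inv_mul_le_iff₀ hgnorm]
      rw [mul_comm] at h7
      rw [← le_div_iff₀ hσpos] at h7
      rwa [div_eq_mul_inv] at h7
    calc ‖g‖⁻¹ * ‖x₀‖⁻¹ * (‖z‖ * ‖T x₀‖) = (‖g‖⁻¹ * ‖z‖) * (‖x₀‖⁻¹ * ‖T x₀‖) := by ring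
      _ ≤ σmin⁻¹ * (‖x₀‖⁻¹ * ‖T x₀‖) := by
          apply mul_le_mul_of_nonneg_right h8; positivity
      _ = ‖x₀‖⁻¹ * ‖T x₀‖ * σmin⁻¹ := by ring
  linarith
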